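/- Given a symmetric matrix S with eigenvalues σᵢ all positive and eigendecomposition S = Vᵀ diag(σ) V, the minimizer of Tr(SX) − log det X over {X symmetric : αI ⪯ X ⪯ βI} is X* = Vᵀ diag(λ) V with λᵢ = min(max(1/σᵢ, α), β). -/

import Mathlib

open Matrix

private lemma psd_diag_nonneg {n : ℕ} {M : Matrix (Fin n) (Fin n) ℝ} (h : M.PosSemidef)
    (i : Fin n) : 0 ≤ M i i := by
  have := h.dotProduct_mulVec_nonneg (Pi.single i 1)
  simpa [dotProduct, mulVec, Pi.single_apply] using this

private lemma herm_trace_eq_sum_eigenvalues {n : ℕ} {A : Matrix (Fin n) (Fin n) ℝ}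
    (hA : A.IsHermitian) : A.trace = ∑ i, hA.eigenvalues i := by
  conv_lhs => rw [hA.spectral_theorem]
  rw [Unitary.conjStarAlgAut_apply, Matrix.trace_mul_cycle, (Unitary.mem_iff.mp (hA.eigenvectorUnitary).2).1, one_mul]
  simp [Matrix.trace_diagonal]

private lemma posdef_conj {n : ℕ} {B C : Matrix (Fin n) (Fin n) ℝ} (hB : B.PosDef)
    (hC : IsUnit C.det) : (Cᵀ * B * C).PosDef := by
  refine .of_dotProduct_mulVec_pos ?_ fun x hx => ?_
  · have := Matrix.isHermitian_conjTranspose_mul_mul C hB.1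
    simpa [Matrix.conjTranspose_eq_transpose_of_trivial] using this
  · have hCx : C *ᵥ x ≠ 0 := by
      have hinj := Matrix.mulVec_injective_iff_isUnit.mpr ((Matrix.isUnit_iff_isUnit_det C).mpr hC)
      exact fun h => hx (hinj (by simpa using h))
    have h2 := hB.dotProduct_mulVec_pos hCx
    have goal0 : x ᵥ* (Cᵀ * (B * C)) = (C *ᵥ x) ᵥ* (B * C) := by
      rw [← Matrix.vecMul_vecMul, Matrix.vecMul_transpose]
    simpa [Matrix.dotProduct_mulVec, Matrix.mulVec_mulVec, Matrix.mul_assoc, goal0] using h2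

open scoped MatrixOrder in
private lemma logdet_ineq {n : ℕ} {A B : Matrix (Fin n) (Fin n) ℝ}
    (hA : A.PosDef) (hB : B.PosDef) :
    Real.log B.det ≤ Real.log A.det + (A⁻¹ * B).trace - n := by
  set R := CFC.sqrt A with hRdef
  have hRpsd : R.PosSemidef := (CFC.sqrt_nonneg A).posSemidef
  have hRR : R * R = A := CFC.sqrt_mul_sqrt_self A hA.posSemidef.nonneg
  have hdetRR : R.det * R.det = A.det := by rw [← Matrix.det_mul, hRR]
  have hdetR : 0 < R.det := by
    have h2 : 0 ≤ R.det := by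
      rw [hRpsd.1.det_eq_prod_eigenvalues]
      exact Finset.prod_nonneg fun i _ => hRpsd.eigenvalues_nonneg i
    rcases h2.lt_or_eq with h | h
    · exact h
    · exfalso; rw [← h, mul_zero] at hdetRR; exact hA.det_pos.ne hdetRR
  have hdetRinv : R⁻¹.det = (R.det)⁻¹ := by
    rw [Matrix.det_nonsing_inv, Ring.inverse_eq_inv]
  have hRinvT : R⁻¹ᵀ = R⁻¹ := by
    have h : Rᵀ = R := by
      have := hRpsd.1
      rwa [Matrix.IsHermitian, Matrix.conjTranspose_eq_transpose_of_trivial] at this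
    rw [Matrix.transpose_nonsing_inv, h]
  have hM : ((R⁻¹)ᵀ * B * R⁻¹).PosDef :=
    posdef_conj hB (by rw [hdetRinv]; exact isUnit_iff_ne_zero.mpr (inv_ne_zero hdetR.ne'))
  rw [hRinvT] at hM
  set M := R⁻¹ * B * R⁻¹ with hMdef
  have hdetM : M.det = B.det / A.det := by
    rw [hMdef, Matrix.det_mul, Matrix.det_mul, hdetRinv]
    field_simp [hdetR.ne', ← hdetRR]
    rw [← hdetRR]; ring
  have htraceM : M.trace = (A⁻¹ * B).trace := by
    rw [hMdef, Matrix.trace_mul_comm, ← Matrix.mul_assoc, ← Matrix.mul_inv_rev, hRR]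
  have key : Real.log M.det ≤ M.trace - n := by
    have hdet : M.det = ∏ i, hM.1.eigenvalues i := by
      have := hM.1.det_eq_prod_eigenvalues
      simpa using this
    rw [hdet, Real.log_prod (fun i _ => (hM.eigenvalues_pos i).ne'),
      herm_trace_eq_sum_eigenvalues hM.1]
    calc ∑ i, Real.log (hM.1.eigenvalues i) ≤ ∑ i : Fin n, (hM.1.eigenvalues i - 1) :=
          Finset.sum_le_sum fun i _ => Real.log_le_sub_one_of_pos (hM.eigenvalues_pos i)
      _ = (∑ i, hM.1.eigenvalues i) - n := by
          rw [Finset.sum_sub_distrib]; simp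
  rw [hdetM, Real.log_div hB.det_pos.ne' hA.det_pos.ne'] at key
  rw [htraceM] at key
  linarith

private theorem clip_aux (n : ℕ) (α β : ℝ) (hα : 0 < α) (hαβ : α ≤ β)
    (V : Matrix (Fin n) (Fin n) ℝ) (hV : Vᵀ * V = 1) (σ : Fin n → ℝ) (hσ : ∀ i, 0 < σ i)
    (S : Matrix (Fin n) (Fin n) ℝ) (hS : S = Vᵀ * Matrix.diagonal σ * V)
    (X : Matrix (Fin n) (Fin n) ℝ) (hX1 : X.IsHermitian) (hX2 : (X - α • 1).PosSemidef)
    (hX3 : ((β • 1 : Matrix (Fin n) (Fin n) ℝ) - X).PosSemidef) :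
    (S * (Vᵀ * Matrix.diagonal (fun i => min (max (σ i)⁻¹ α) β) * V)).trace -
      Real.log (Vᵀ * Matrix.diagonal (fun i => min (max (σ i)⁻¹ α) β) * V).det ≤
    (S * X).trace - Real.log X.det := by
  set lam : Fin n → ℝ := fun i => min (max (σ i)⁻¹ α) β with hlamdef
  have hlamα : ∀ i, α ≤ lam i := fun i => le_min (le_max_right _ _) hαβ
  have hlamβ : ∀ i, lam i ≤ β := fun i => min_le_right _ _
  have hlam0 : ∀ i, 0 < lam i := fun i => hα.trans_le (hlamα i)
  have hVV' : V * Vᵀ = 1 := mul_eq_one_comm.mp hV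
  have hVdet : IsUnit V.det := by
    have h : V.det * V.det = 1 := by
      have := congrArg Matrix.det hV
      rwa [Matrix.det_mul, Matrix.det_transpose, Matrix.det_one] at this
    exact IsUnit.of_mul_eq_one _ h
  set Xstar : Matrix (Fin n) (Fin n) ℝ := Vᵀ * Matrix.diagonal lam * V with hXstardef
  have hXstarPD : Xstar.PosDef :=
    posdef_conj (Matrix.posDef_diagonal_iff.mpr hlam0) hVdet
  have hα1PD : ((α : ℝ) • (1 : Matrix (Fin n) (Fin n) ℝ)).PosDef := by
    rw [Matrix.smul_one_eq_diagonal]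
    exact Matrix.posDef_diagonal_iff.mpr fun _ => hα
  have hXPD : X.PosDef := by
    have := Matrix.PosDef.posSemidef_add hX2 hα1PD
    simpa using this
  have hDD : Matrix.diagonal lam * Matrix.diagonal (fun i => (lam i)⁻¹) = 1 := by
    rw [Matrix.diagonal_mul_diagonal]
    have h : (fun i => lam i * (lam i)⁻¹) = fun _ => (1 : ℝ) :=
      funext fun i => mul_inv_cancel₀ (hlam0 i).ne'
    rw [h, Matrix.diagonal_one]
  have hXinv : Xstar⁻¹ = Vᵀ * Matrix.diagonal (fun i => (lam i)⁻¹) * V := by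
    apply Matrix.inv_eq_right_inv
    rw [hXstardef]
    simp only [Matrix.mul_assoc]
    rw [← Matrix.mul_assoc V Vᵀ, hVV', one_mul, ← Matrix.mul_assoc (Matrix.diagonal lam), hDD,
      one_mul, hV]
  have trace_diag_mul : ∀ (d : Fin n → ℝ) (M : Matrix (Fin n) (Fin n) ℝ),
      (Matrix.diagonal d * M).trace = ∑ i, d i * M i i := by
    intro d M
    unfold Matrix.trace Matrix.diag
    refine Finset.sum_congr rfl fun i _ => ?_
    rw [Matrix.mul_apply]
    simp [Matrix.diagonal_apply, Finset.sum_ite_eq]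
  set Y : Matrix (Fin n) (Fin n) ℝ := V * X * Vᵀ with hYdef
  have trace_conj : ∀ (d : Fin n → ℝ),
      ((Vᵀ * Matrix.diagonal d * V) * X).trace = ∑ i, d i * Y i i := by
    intro d
    have h1 : (Vᵀ * Matrix.diagonal d * V) * X = Vᵀ * (Matrix.diagonal d * (V * X)) := by
      simp only [Matrix.mul_assoc]
    rw [h1, Matrix.trace_mul_comm, Matrix.mul_assoc, Matrix.mul_assoc, ← Matrix.mul_assoc V X Vᵀ,
      ← hYdef, trace_diag_mul]
  have hYstar : V * Xstar * Vᵀ = Matrix.diagonal lam := by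
    rw [hXstardef]
    simp only [Matrix.mul_assoc]
    rw [← Matrix.mul_assoc V Vᵀ, hVV', one_mul, Matrix.mul_one]
  have htrSXstar : (S * Xstar).trace = ∑ i, σ i * lam i := by
    rw [hS]
    have h1 : (Vᵀ * Matrix.diagonal σ * V) * Xstar = Vᵀ * (Matrix.diagonal σ * (V * Xstar)) := by
      simp only [Matrix.mul_assoc]
    rw [h1, Matrix.trace_mul_comm, Matrix.mul_assoc, Matrix.mul_assoc,
      ← Matrix.mul_assoc V Xstar Vᵀ, hYstar, trace_diag_mul]
    simp [Matrix.diagonal_apply_eq]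
  have htrSX : (S * X).trace = ∑ i, σ i * Y i i := by rw [hS]; exact trace_conj σ
  have htrinvX : (Xstar⁻¹ * X).trace = ∑ i, (lam i)⁻¹ * Y i i := by
    rw [hXinv]; exact trace_conj _
  have hYα : ∀ i, α ≤ Y i i := by
    intro i
    have hpsd : (V * (X - α • 1) * Vᵀ).PosSemidef := by
      have := hX2.mul_mul_conjTranspose_same V
      simpa [Matrix.conjTranspose_eq_transpose_of_trivial] using this
    have hid : V * (X - α • 1) * Vᵀ = Y - α • 1 := by
      rw [Matrix.mul_sub, Matrix.sub_mul, Matrix.mul_smul, Matrix.mul_one, Matrix.smul_mul, hVV',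
        hYdef]
    rw [hid] at hpsd
    have := psd_diag_nonneg hpsd i
    simp [Matrix.sub_apply, Matrix.smul_apply, Matrix.one_apply_eq] at this
    linarith
  have hYβ : ∀ i, Y i i ≤ β := by
    intro i
    have hpsd : (V * (β • 1 - X) * Vᵀ).PosSemidef := by
      have := hX3.mul_mul_conjTranspose_same V
      simpa [Matrix.conjTranspose_eq_transpose_of_trivial] using this
    have hid : V * ((β • (1 : Matrix (Fin n) (Fin n) ℝ)) - X) * Vᵀ = β • 1 - Y := by
      rw [Matrix.mul_sub, Matrix.sub_mul, Matrix.mul_smul, Matrix.mul_one, Matrix.smul_mul, hVV',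
        hYdef]
    rw [hid] at hpsd
    have := psd_diag_nonneg hpsd i
    simp [Matrix.sub_apply, Matrix.smul_apply, Matrix.one_apply_eq] at this
    linarith
  have hpt : ∀ i, 0 ≤ (σ i - (lam i)⁻¹) * (Y i i - lam i) := by
    intro i
    rcases le_or_gt (σ i)⁻¹ α with h | h
    · have hlami : lam i = α := by
        simp only [hlamdef]
        rw [max_eq_right h, min_eq_left hαβ]
      have h1 : α⁻¹ ≤ σ i := by
        rw [← inv_inv (σ i)]
        exact inv_anti₀ (inv_pos.mpr (hσ i)) h
      apply mul_nonneg
      · rw [hlami]; linarith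
      · rw [hlami]; linarith [hYα i]
    · rcases le_or_gt β (σ i)⁻¹ with h2 | h2
      · have hlami : lam i = β := by
          simp only [hlamdef]
          rw [max_eq_left (hαβ.trans h2), min_eq_right h2]
        have h1 : σ i ≤ β⁻¹ := by
          rw [← inv_inv (σ i)]
          exact inv_anti₀ (hα.trans_le hαβ) h2
        have hs : σ i - (lam i)⁻¹ ≤ 0 := by rw [hlami]; linarith
        have hy : Y i i - lam i ≤ 0 := by rw [hlami]; linarith [hYβ i]
        rw [← neg_mul_neg]
        exact mul_nonneg (neg_nonneg.2 hs) (neg_nonneg.2 hy)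
      · have hlami : lam i = (σ i)⁻¹ := by
          simp only [hlamdef]
          rw [max_eq_left h.le, min_eq_left h2.le]
        rw [hlami, inv_inv, sub_self, zero_mul]
  have hsum : 0 ≤ (∑ i, σ i * Y i i) - (∑ i, (lam i)⁻¹ * Y i i) - (∑ i, σ i * lam i) + n := by
    have hterm : ∀ i, (σ i - (lam i)⁻¹) * (Y i i - lam i)
        = σ i * Y i i - (lam i)⁻¹ * Y i i - σ i * lam i + 1 := by
      intro i
      have h1 : (lam i)⁻¹ * lam i = 1 := inv_mul_cancel₀ (hlam0 i).ne'
      linear_combination h1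
    have hc : ∑ i, (σ i - (lam i)⁻¹) * (Y i i - lam i)
        = (∑ i, σ i * Y i i) - (∑ i, (lam i)⁻¹ * Y i i) - (∑ i, σ i * lam i) + n := by
      rw [Finset.sum_congr rfl fun i _ => hterm i]
      rw [Finset.sum_add_distrib, Finset.sum_sub_distrib, Finset.sum_sub_distrib]
      simp
    rw [← hc]
    exact Finset.sum_nonneg fun i _ => hpt i
  have key := logdet_ineq hXstarPD hXPD
  rw [htrinvX] at key
  rw [htrSXstar, htrSX]
  linarith

private theorem clip_mem (n : ℕ) (α β : ℝ) (hα : 0 < α) (hαβ : α ≤ β)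
    (V : Matrix (Fin n) (Fin n) ℝ) (hV : Vᵀ * V = 1) (σ : Fin n → ℝ) (hσ : ∀ i, 0 < σ i) :
    (Vᵀ * Matrix.diagonal (fun i => min (max (σ i)⁻¹ α) β) * V).IsHermitian ∧
    ((Vᵀ * Matrix.diagonal (fun i => min (max (σ i)⁻¹ α) β) * V) - α • 1).PosSemidef ∧
    ((β • 1 : Matrix (Fin n) (Fin n) ℝ) -
      (Vᵀ * Matrix.diagonal (fun i => min (max (σ i)⁻¹ α) β) * V)).PosSemidef := by
  set lam : Fin n → ℝ := fun i => min (max (σ i)⁻¹ α) β with hlamdef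
  have hlamα : ∀ i, α ≤ lam i := fun i => le_min (le_max_right _ _) hαβ
  have hlamβ : ∀ i, lam i ≤ β := fun i => min_le_right _ _
  have conj_psd : ∀ e : Fin n → ℝ, (∀ i, 0 ≤ e i) →
      (Vᵀ * Matrix.diagonal e * V).PosSemidef := by
    intro e he
    have := (Matrix.posSemidef_diagonal_iff.mpr he).conjTranspose_mul_mul_same V
    simpa [Matrix.conjTranspose_eq_transpose_of_trivial] using this
  refine ⟨?_, ?_, ?_⟩
  · have := Matrix.isHermitian_conjTranspose_mul_mul V (Matrix.isHermitian_diagonal lam)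
    simpa [Matrix.conjTranspose_eq_transpose_of_trivial] using this
  · have e1 : Vᵀ * Matrix.diagonal lam * V - α • 1
        = Vᵀ * Matrix.diagonal (fun i => lam i - α) * V := by
      have h2 : Matrix.diagonal (fun i => lam i - α)
          = Matrix.diagonal lam - α • 1 := by
        rw [Matrix.smul_one_eq_diagonal, Matrix.diagonal_sub]
      rw [h2, Matrix.mul_sub, Matrix.sub_mul, Matrix.mul_smul, Matrix.mul_one, Matrix.smul_mul, hV]
    rw [e1]
    exact conj_psd _ fun i => by linarith [hlamα i]
  · have e1 : (β • 1 : Matrix (Fin n) (Fin n) ℝ) - Vᵀ * Matrix.diagonal lam * V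
        = Vᵀ * Matrix.diagonal (fun i => β - lam i) * V := by
      have h2 : Matrix.diagonal (fun i => β - lam i)
          = (β • 1 : Matrix (Fin n) (Fin n) ℝ) - Matrix.diagonal lam := by
        rw [Matrix.smul_one_eq_diagonal, Matrix.diagonal_sub]
      rw [h2, Matrix.mul_sub, Matrix.sub_mul, Matrix.mul_smul, Matrix.mul_one, Matrix.smul_mul, hV]
    rw [e1]
    exact conj_psd _ fun i => by linarith [hlamβ i]

theorem min_trace_minus_logdet_clipping (n : ℕ) (α β : ℝ) (hα : 0 < α) (hαβ : α ≤ β)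
    (V : Matrix (Fin n) (Fin n) ℝ) (hV : Vᵀ * V = 1) (σ : Fin n → ℝ)
    (hσ : ∀ i, 0 < σ i)
    (S : Matrix (Fin n) (Fin n) ℝ) (hS : S = Vᵀ * Matrix.diagonal σ * V) :
    let Q : Set (Matrix (Fin n) (Fin n) ℝ) :=
      {X | X.IsHermitian ∧ (X - α • 1).PosSemidef ∧ ((β • 1 : Matrix (Fin n) (Fin n) ℝ) - X).PosSemidef}
    let f : Matrix (Fin n) (Fin n) ℝ → ℝ := fun X => (S * X).trace - Real.log X.det
    let Xstar : Matrix (Fin n) (Fin n) ℝ :=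
      Vᵀ * Matrix.diagonal (fun i => min (max (σ i)⁻¹ α) β) * V
    Xstar ∈ Q ∧ ∀ X ∈ Q, f Xstar ≤ f X := by
  intro Q f Xstar
  refine ⟨clip_mem n α β hα hαβ V hV σ hσ, fun X hX => ?_⟩
  obtain ⟨h1, h2, h3⟩ := hX
  exact clip_aux n α β hα hαβ V hV σ hσ S hS X h1 h2 h3
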